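/- arXiv:1904.09573 — 2 statements merged into one kernel-verified Lean document; each statement's English description precedes it below -/
import Mathlib

section
/- Fix real constants c_l, c_e, d_l, d_e, p_l, p_e with c_l > d_l ≥ 0 and c_e > d_e ≥ 0. Any critical point θ of g(θ) = (c_l + d_l cos(θ + p_l)) / (c_e + d_e cos(θ + p_e)) satisfies A sin θ + B cos θ = d_l d_e sin(p_e − p_l), where A = c_e d_l cos p_l − c_l d_e cos p_e and B = c_e d_l sin p_l − c_l d_e sin p_e. -/
/-- Any critical point of
`g(θ) = (c_l + d_l cos(θ+p_l))/(c_e + d_e cos(θ+p_e))` satisfies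
`A sin θ + B cos θ = d_l d_e sin(p_e − p_l)`. -/
theorem stmt3 (cl ce dl de pl pe : ℝ)
    (hdl : 0 ≤ dl) (hcl : dl < cl) (hde : 0 ≤ de) (hce : de < ce)
    (θ : ℝ)
    (hcrit : deriv (fun t : ℝ =>
      (cl + dl * Real.cos (t + pl)) / (ce + de * Real.cos (t + pe))) θ = 0) :
    (ce * dl * Real.cos pl - cl * de * Real.cos pe) * Real.sin θ
      + (ce * dl * Real.sin pl - cl * de * Real.sin pe) * Real.cos θ
      = dl * de * Real.sin (pe - pl) := by
  have hden : ce + de * Real.cos (θ + pe) > 0 := by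
    nlinarith [Real.neg_one_le_cos (θ + pe), Real.cos_le_one (θ + pe)]
  have hnum : HasDerivAt (fun t : ℝ => cl + dl * Real.cos (t + pl))
      (-(dl * Real.sin (θ + pl))) θ := by
    have h1 : HasDerivAt (fun t : ℝ => t + pl) 1 θ :=
      (hasDerivAt_id θ).add_const pl
    have h2 := (Real.hasDerivAt_cos (θ + pl)).comp θ h1
    simpa [mul_comm] using ((h2.const_mul dl).const_add cl)
  have hden' : HasDerivAt (fun t : ℝ => ce + de * Real.cos (t + pe))
      (-(de * Real.sin (θ + pe))) θ := by
    have h1 : HasDerivAt (fun t : ℝ => t + pe) 1 θ :=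
      (hasDerivAt_id θ).add_const pe
    have h2 := (Real.hasDerivAt_cos (θ + pe)).comp θ h1
    simpa [mul_comm] using ((h2.const_mul de).const_add ce)
  have hdiv := hnum.div hden' (ne_of_gt hden)
  have hd := hdiv.deriv
  change deriv (fun t : ℝ => (cl + dl * Real.cos (t + pl)) / (ce + de * Real.cos (t + pe))) θ = _ at hd
  rw [hcrit] at hd
  have hsq : (ce + de * Real.cos (θ + pe)) ^ 2 ≠ 0 := pow_ne_zero 2 (ne_of_gt hden)
  have hkey : -(dl * Real.sin (θ + pl)) * (ce + de * Real.cos (θ + pe))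
      - (cl + dl * Real.cos (θ + pl)) * (-(de * Real.sin (θ + pe))) = 0 := by
    field_simp at hd
    linarith [hd]
  rw [Real.sin_add, Real.cos_add, Real.sin_add, Real.cos_add, Real.sin_sub] at *
  linear_combination (-1) * hkey + dl * de * (Real.sin pe * Real.cos pl - Real.cos pe * Real.sin pl) * Real.sin_sq_add_cos_sq θ
end

section
/- Let Y_l, Y_e be M×M Hermitian positive definite matrices and define g(v) = (v^H Y_l v)/(v^H Y_e v) for v ≠ 0. Fix v_z ≠ 0 and define f(v | v_z) = 2 Re(v_z^H Y_l v)/(v_z^H Y_e v_z) − (v_z^H Y_l v_z)/(v_z^H Y_e v_z)² · [ λ_max(Y_e) v^H v + 2 Re(v_z^H (Y_e − λ_max(Y_e) I) v) ]. Then for all v ≠ 0, g(v) ≥ f(v | v_z) + (g(v_z) − f(v_z | v_z)). -/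
open Matrix ComplexOrder

private lemma herm_re_symm {M : ℕ} {A : Matrix (Fin M) (Fin M) ℂ} (hA : A.IsHermitian)
    (x y : Fin M → ℂ) : (star x ⬝ᵥ A.mulVec y).re = (star y ⬝ᵥ A.mulVec x).re := by
  have h : star x ⬝ᵥ A.mulVec y = star (star y ⬝ᵥ A.mulVec x) := by
    rw [star_dotProduct, star_mulVec, ← dotProduct_mulVec, hA.eq]
  rw [h, Complex.star_def, Complex.conj_re]

private lemma psd_lam_sub {M : ℕ} {Ye : Matrix (Fin M) (Fin M) ℂ} (hYe : Ye.PosDef)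
    {lam : ℝ} (hlam : IsGreatest (Set.range hYe.1.eigenvalues) lam) :
    ((lam : ℂ) • (1 : Matrix (Fin M) (Fin M) ℂ) - Ye).PosSemidef := by
  set U : Matrix (Fin M) (Fin M) ℂ := (hYe.1.eigenvectorUnitary : Matrix (Fin M) (Fin M) ℂ)
  have hUU : U * star U = 1 := (Matrix.mem_unitaryGroup_iff).mp hYe.1.eigenvectorUnitary.2
  have key : (lam : ℂ) • (1 : Matrix (Fin M) (Fin M) ℂ) - Ye
      = U * (diagonal (fun i => ((lam - hYe.1.eigenvalues i : ℝ) : ℂ))) * star U := by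
    have hd : (diagonal (fun i => ((lam - hYe.1.eigenvalues i : ℝ) : ℂ)))
        = (lam : ℂ) • (1 : Matrix (Fin M) (Fin M) ℂ)
          - diagonal (RCLike.ofReal ∘ hYe.1.eigenvalues) := by
      rw [smul_one_eq_diagonal, diagonal_sub]
      funext i
      simp [Function.comp]
    rw [hd, Matrix.mul_sub, Matrix.sub_mul]
    conv_lhs => rw [hYe.1.spectral_theorem, Unitary.conjStarAlgAut_apply]
    congr 1
    rw [Matrix.mul_smul, Matrix.smul_mul, mul_one, hUU]
  rw [key, Matrix.star_eq_conjTranspose]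
  refine PosSemidef.mul_mul_conjTranspose_same ?_ U
  refine posSemidef_diagonal_iff.mpr fun i => ?_
  have h0 : (0:ℝ) ≤ lam - hYe.1.eigenvalues i := by
    have := hlam.2 (Set.mem_range_self i)
    linarith
  exact Complex.zero_le_real.mpr h0

/-- MM surrogate lower bound: with `g(v) = (vᴴ Y_l v)/(vᴴ Y_e v)` and
`f(v|v_z)` as in the paper, `g(v) ≥ f(v|v_z) + (g(v_z) − f(v_z|v_z))` for all `v ≠ 0`. -/
theorem stmt10 (M : ℕ) (Yl Ye : Matrix (Fin M) (Fin M) ℂ)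
    (hYl : Yl.PosDef) (hYe : Ye.PosDef)
    (lam : ℝ) (hlam : IsGreatest (Set.range hYe.1.eigenvalues) lam)
    (vz : Fin M → ℂ) (hvz : vz ≠ 0) :
    let g : (Fin M → ℂ) → ℝ := fun v =>
      (star v ⬝ᵥ Yl.mulVec v).re / (star v ⬝ᵥ Ye.mulVec v).re
    let f : (Fin M → ℂ) → ℝ := fun v =>
      2 * (star vz ⬝ᵥ Yl.mulVec v).re / (star vz ⬝ᵥ Ye.mulVec vz).re
        - ((star vz ⬝ᵥ Yl.mulVec vz).re / ((star vz ⬝ᵥ Ye.mulVec vz).re) ^ 2)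
          * (lam * (star v ⬝ᵥ v).re
            + 2 * (star vz ⬝ᵥ (Ye - (lam : ℂ) • (1 : Matrix (Fin M) (Fin M) ℂ)).mulVec v).re)
    ∀ v : Fin M → ℂ, v ≠ 0 → g v ≥ f v + (g vz - f vz) := by
  intro g f v hv
  simp only [g, f]
  -- abbreviations
  set D : Matrix (Fin M) (Fin M) ℂ := Ye - (lam : ℂ) • (1 : Matrix (Fin M) (Fin M) ℂ) with hD
  set av : ℝ := (star v ⬝ᵥ Yl.mulVec v).re with hav
  set az : ℝ := (star vz ⬝ᵥ Yl.mulVec vz).re with haz'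
  set azv : ℝ := (star vz ⬝ᵥ Yl.mulVec v).re with hazv
  set bv : ℝ := (star v ⬝ᵥ Ye.mulVec v).re with hbv'
  set bz : ℝ := (star vz ⬝ᵥ Ye.mulVec vz).re with hbz'
  set nv : ℝ := (star v ⬝ᵥ v).re with hnv
  set nz : ℝ := (star vz ⬝ᵥ vz).re with hnz
  set dzv : ℝ := (star vz ⬝ᵥ D.mulVec v).re with hdzv
  have hDherm : D.IsHermitian := by
    unfold Matrix.IsHermitian
    rw [hD, conjTranspose_sub, hYe.1.eq, conjTranspose_smul, conjTranspose_one,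
      Complex.star_def, Complex.conj_ofReal]
  -- positivity facts
  have hbvpos : 0 < bv := (Complex.lt_def.mp (hYe.dotProduct_mulVec_pos hv)).1
  have hbzpos : 0 < bz := (Complex.lt_def.mp (hYe.dotProduct_mulVec_pos hvz)).1
  have hazpos : 0 < az := (Complex.lt_def.mp (hYl.dotProduct_mulVec_pos hvz)).1
  -- re-of-D quadratic forms
  have hDquad : ∀ x : Fin M → ℂ, (star x ⬝ᵥ D.mulVec x).re
      = (star x ⬝ᵥ Ye.mulVec x).re - lam * (star x ⬝ᵥ x).re := by
    intro x
    rw [hD, sub_mulVec, smul_mulVec, one_mulVec, dotProduct_sub, dotProduct_smul,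
      Complex.sub_re, smul_eq_mul, Complex.re_ofReal_mul]
  -- Inequality 1 : convexity of quadratic-over-linear
  have H1 : 0 ≤ az * bv ^ 2 - 2 * azv * bv * bz + av * bz ^ 2 := by
    set u : Fin M → ℂ := (bz : ℂ) • v - (bv : ℂ) • vz with hu
    have h := hYl.posSemidef.dotProduct_mulVec_nonneg u
    have e1 : star u ⬝ᵥ Yl.mulVec u
        = ((bz * bz : ℝ) : ℂ) * (star v ⬝ᵥ Yl.mulVec v)
          - ((bz * bv : ℝ) : ℂ) * (star v ⬝ᵥ Yl.mulVec vz)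
          - ((bv * bz : ℝ) : ℂ) * (star vz ⬝ᵥ Yl.mulVec v)
          + ((bv * bv : ℝ) : ℂ) * (star vz ⬝ᵥ Yl.mulVec vz) := by
      simp only [hu, star_sub, star_smul, Complex.star_def, Complex.conj_ofReal,
        sub_dotProduct, smul_dotProduct, dotProduct_sub, dotProduct_smul,
        mulVec_sub, mulVec_smul, smul_eq_mul]
      push_cast
      ring
    have hre : 0 ≤ (star u ⬝ᵥ Yl.mulVec u).re := (Complex.le_def.mp h).1
    rw [e1] at hre
    simp only [Complex.add_re, Complex.sub_re, Complex.re_ofReal_mul] at hre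
    have hsymm : (star v ⬝ᵥ Yl.mulVec vz).re = azv := herm_re_symm hYl.1 v vz
    rw [hsymm, ← hav, ← hazv, ← haz'] at hre
    nlinarith [hre]
  -- Inequality 2 : quadratic majorization of the denominator
  have H2 : bv ≤ lam * nv + 2 * dzv - bz + lam * nz := by
    have hpsd := psd_lam_sub hYe hlam
    set w : Fin M → ℂ := v - vz with hw
    have h := hpsd.dotProduct_mulVec_nonneg w
    have hND : (lam : ℂ) • (1 : Matrix (Fin M) (Fin M) ℂ) - Ye = -D := by
      rw [hD, neg_sub]
    have e2 : star w ⬝ᵥ ((lam : ℂ) • (1 : Matrix (Fin M) (Fin M) ℂ) - Ye).mulVec w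
        = -(star v ⬝ᵥ D.mulVec v) + (star v ⬝ᵥ D.mulVec vz) + (star vz ⬝ᵥ D.mulVec v)
          - (star vz ⬝ᵥ D.mulVec vz) := by
      rw [hND]
      simp only [hw, neg_mulVec, star_sub, sub_dotProduct, dotProduct_neg,
        mulVec_sub, dotProduct_sub]
      ring
    have hre : 0 ≤ (star w ⬝ᵥ ((lam : ℂ) • (1 : Matrix (Fin M) (Fin M) ℂ) - Ye).mulVec w).re :=
      (Complex.le_def.mp h).1
    rw [e2] at hre
    simp only [Complex.add_re, Complex.sub_re, Complex.neg_re] at hre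
    have hsymm : (star v ⬝ᵥ D.mulVec vz).re = dzv := herm_re_symm hDherm v vz
    have hv' : (star v ⬝ᵥ D.mulVec v).re = bv - lam * nv := hDquad v
    have hz' : (star vz ⬝ᵥ D.mulVec vz).re = bz - lam * nz := hDquad vz
    rw [hsymm, hv', hz', ← hdzv] at hre
    linarith
  -- final algebra
  rw [ge_iff_le, ← sub_nonneg]
  have key : av / bv
      - ((2 * azv / bz - az / bz ^ 2 * (lam * nv + 2 * dzv))
        + (az / bz - (2 * az / bz - az / bz ^ 2 * (lam * nz + 2 * (bz - lam * nz)))))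
      = ((az * bv ^ 2 - 2 * azv * bv * bz + av * bz ^ 2)
          + az * bv * ((lam * nv + 2 * dzv - bz + lam * nz) - bv)) / (bv * bz ^ 2) := by
    field_simp
    ring
  have hdzz : (star vz ⬝ᵥ D.mulVec vz).re = bz - lam * nz := hDquad vz
  rw [hdzz, key]
  apply div_nonneg
  · nlinarith [mul_nonneg (mul_nonneg hazpos.le hbvpos.le) (sub_nonneg.mpr H2)]
  · positivity
end
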